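/- Let M be an Ĥ₄-module free of rank one over ℂ[s,d], with p·1 ≠ 0, (s⊗tᵏ)·1 = αₖs + βₖ with αₖ ∈ ℂ*, and suppose p·1 = g₀(s) ∈ ℂ[s] (degree 0 in d). Then (p⊗tᵏ)·1 = α₁ᵏ · (p·1) for all k ∈ ℤ, where α₁ = α. -/

import Mathlib

open Polynomial

/-- ℂ[s,d], realized as polynomials in d (outer variable) with coefficients in
ℂ[s] (inner variable). -/
abbrev NWA : Type := Polynomial (Polynomial ℂ)

/-- A representation of the affine Nappi-Witten Lie algebra Ĥ₄ on ℂ[s,d]: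
operators for p⊗tᵏ, q⊗tᵏ, r⊗tᵏ, s⊗tᵏ, 𝐤 and d satisfying the defining
bracket relations of Ĥ₄ (with (p,q) = (r,s) = 1, other pairings zero). -/
structure NWAffineRep where
  P : ℤ → Module.End ℂ NWA
  Q : ℤ → Module.End ℂ NWA
  R : ℤ → Module.End ℂ NWA
  S : ℤ → Module.End ℂ NWA
  K : Module.End ℂ NWA
  D : Module.End ℂ NWA
  rel_PQ : ∀ k l : ℤ, ⁅P k, Q l⁆ = R (k + l) + (if k + l = 0 then (k : ℂ) else 0) • K
  rel_PP : ∀ k l : ℤ, ⁅P k, P l⁆ = 0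
  rel_QQ : ∀ k l : ℤ, ⁅Q k, Q l⁆ = 0
  rel_PR : ∀ k l : ℤ, ⁅P k, R l⁆ = 0
  rel_QR : ∀ k l : ℤ, ⁅Q k, R l⁆ = 0
  rel_RR : ∀ k l : ℤ, ⁅R k, R l⁆ = 0
  rel_SP : ∀ k l : ℤ, ⁅S k, P l⁆ = P (k + l)
  rel_SQ : ∀ k l : ℤ, ⁅S k, Q l⁆ = -(Q (k + l))
  rel_RS : ∀ k l : ℤ, ⁅R k, S l⁆ = (if k + l = 0 then (k : ℂ) else 0) • K
  rel_SS : ∀ k l : ℤ, ⁅S k, S l⁆ = 0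
  rel_DP : ∀ k : ℤ, ⁅D, P k⁆ = (k : ℂ) • P k
  rel_DQ : ∀ k : ℤ, ⁅D, Q k⁆ = (k : ℂ) • Q k
  rel_DR : ∀ k : ℤ, ⁅D, R k⁆ = (k : ℂ) • R k
  rel_DS : ∀ k : ℤ, ⁅D, S k⁆ = (k : ℂ) • S k
  rel_KP : ∀ k : ℤ, ⁅K, P k⁆ = 0
  rel_KQ : ∀ k : ℤ, ⁅K, Q k⁆ = 0
  rel_KR : ∀ k : ℤ, ⁅K, R k⁆ = 0
  rel_KS : ∀ k : ℤ, ⁅K, S k⁆ = 0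
  rel_KD : ⁅K, D⁆ = 0


/-- Let M be an Ĥ₄-module free of rank one over ℂ[s,d] (s and d acting by
multiplication), with (s⊗tᵏ)·1 = αₖs + βₖ where αₖ ∈ ℂ*, and suppose
p·1 = g₀(s) ∈ ℂ[s] is nonzero (degree 0 in d).  Then
(p⊗tᵏ)·1 = α₁ᵏ·(p·1) for all k ∈ ℤ, where α₁ = α. -/
theorem stmt19 (ρ : NWAffineRep)
    (hS0 : ∀ x : NWA, ρ.S 0 x = Polynomial.C (Polynomial.X : Polynomial ℂ) * x)
    (hD : ∀ x : NWA, ρ.D x = Polynomial.X * x)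
    (α β : ℤ → ℂ) (hα : ∀ k, α k ≠ 0)
    (hSk : ∀ k : ℤ, ρ.S k 1 =
      Polynomial.C (Polynomial.C (α k) * Polynomial.X + Polynomial.C (β k)))
    (g₀ : Polynomial ℂ) (hg₀ : g₀ ≠ 0) (hp : ρ.P 0 1 = Polynomial.C g₀) :
    ∀ k : ℤ, ρ.P k 1 = (α 1) ^ k • ρ.P 0 1 := by
  -- C (C a) is the algebra map
  have hCC : ∀ a : ℂ, (Polynomial.C (Polynomial.C a) : NWA) = algebraMap ℂ NWA a := by
    intro a; rfl
  have hCsmul : ∀ (a : ℂ) (f : Polynomial ℂ), (C (a • f) : NWA) = a • C f := by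
    intro a f
    rw [Polynomial.smul_eq_C_mul, map_mul, hCC, ← Algebra.smul_def]
  -- S m commutes with multiplication by s = C X
  have hScomm : ∀ (m : ℤ) (x : NWA), ρ.S m (C X * x) = C X * ρ.S m x := by
    intro m x
    have h : ρ.S 0 * ρ.S m - ρ.S m * ρ.S 0 = 0 := ρ.rel_SS 0 m
    have h2 := LinearMap.congr_fun h x
    simp only [LinearMap.sub_apply, Module.End.mul_apply, LinearMap.zero_apply, hS0] at h2
    linear_combination -h2
  -- S m (C f) = C f * S m 1
  have hSC : ∀ (m : ℤ) (f : Polynomial ℂ), ρ.S m (C f) = C f * ρ.S m 1 := by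
    intro m f
    induction f using Polynomial.induction_on with
    | C a =>
        rw [hCC, Algebra.algebraMap_eq_smul_one, map_smul, smul_mul_assoc, one_mul]
    | add p q hp hq =>
        simp only [map_add, add_mul, hp, hq]
    | monomial n a ih =>
        have e : (C (C a * X ^ (n + 1)) : NWA) = C X * C (C a * X ^ n) := by
          rw [← map_mul]; ring_nf
        rw [e, hScomm, ih]; ring
  -- P k (C X * x) = C X * P k x - P k x
  have hPs : ∀ (k : ℤ) (x : NWA), ρ.P k (C X * x) = C X * ρ.P k x - ρ.P k x := by
    intro k x
    have h : ρ.S 0 * ρ.P k - ρ.P k * ρ.S 0 = ρ.P (0 + k) := ρ.rel_SP 0 k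
    rw [zero_add] at h
    have h2 := LinearMap.congr_fun h x
    simp only [LinearMap.sub_apply, Module.End.mul_apply, hS0] at h2
    linear_combination -h2
  -- key step
  have step : ∀ (m k : ℤ) (f : Polynomial ℂ), ρ.P k 1 = C f →
      ρ.P (m + k) 1 = (α m) • ρ.P k 1 := by
    intro m k f hf
    have h : ρ.S m * ρ.P k - ρ.P k * ρ.S m = ρ.P (m + k) := ρ.rel_SP m k
    have h2 := LinearMap.congr_fun h 1
    simp only [LinearMap.sub_apply, Module.End.mul_apply] at h2
    rw [← h2, hf, hSC m f]
    have hSm1 : ρ.S m 1 = (α m) • (C X : NWA) + (β m) • (1 : NWA) := by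
      rw [hSk m, map_add, map_mul, hCC, hCC, ← Algebra.smul_def,
        Algebra.algebraMap_eq_smul_one]
    rw [hSm1]
    have e2 : ρ.P k ((α m) • (C X : NWA) + (β m) • (1 : NWA))
        = (α m) • ρ.P k (C X * 1) + (β m) • ρ.P k 1 := by
      rw [map_add, map_smul, map_smul, mul_one]
    rw [e2, hPs k 1, hf]
    simp only [Algebra.smul_def]
    ring
  -- P k 1 = α k • C g₀ for all k
  have hPk : ∀ k : ℤ, ρ.P k 1 = (α k) • Polynomial.C g₀ := by
    intro k
    have h := step k 0 g₀ hp
    rw [add_zero] at h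
    rw [h, hp]
  have hC : (Polynomial.C g₀ : NWA) ≠ 0 := by simpa using hg₀
  have hα0 : α 0 = 1 := by
    have h00 := hPk 0
    rw [hp] at h00
    have e : (α 0 - 1) • Polynomial.C g₀ = 0 := by
      rw [sub_smul, one_smul, ← h00, sub_self]
    rcases smul_eq_zero.mp e with h | h
    · exact sub_eq_zero.mp h
    · exact absurd h hC
  -- recurrences
  have up : ∀ k : ℤ, ρ.P (1 + k) 1 = (α 1) • ρ.P k 1 :=
    fun k => step 1 k ((α k) • g₀) (by rw [hPk k, hCsmul])
  have down : ∀ k : ℤ, ρ.P (-1 + k) 1 = (α (-1)) • ρ.P k 1 :=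
    fun k => step (-1) k ((α k) • g₀) (by rw [hPk k, hCsmul])
  -- α(-1) * α 1 = 1
  have hprod : α (-1) * α 1 = 1 := by
    have h1 := down 1
    norm_num at h1
    rw [hPk 1, hPk 0, smul_smul, hα0] at h1
    have e : (α (-1) * α 1 - 1) • Polynomial.C g₀ = 0 := by
      rw [sub_smul, one_smul, ← h1, one_smul, sub_self]
    rcases smul_eq_zero.mp e with h | h
    · exact sub_eq_zero.mp h
    · exact absurd h hC
  have hinv : α (-1) = (α 1)⁻¹ := eq_inv_of_mul_eq_one_left hprod
  intro k
  induction k using Int.induction_on with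
  | zero => simp
  | succ n ih =>
      have h := up n
      rw [show (1 : ℤ) + n = (n : ℤ) + 1 by ring] at h
      rw [h, ih, smul_smul, zpow_add_one₀ (hα 1), mul_comm]
  | pred n ih =>
      have h := down (-n)
      rw [show (-1 : ℤ) + (-n) = -(n : ℤ) - 1 by ring] at h
      rw [h, ih, smul_smul, hinv, zpow_sub_one₀ (hα 1), mul_comm]
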